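/- Let A, B > 0. There is a constant c (depending only on A, B) such that for all integers n ≥ 1 and all q ∈ (1/2, 1), one has (q^{A+n};q)_∞ / (q^{B+n};q)_∞ ≤ c · (1-q^n)^{B-A}. -/

import Mathlib

/-- The infinite q-Pochhammer symbol `(x;q)_∞ = ∏_{k=0}^{∞} (1 - x q^k)`. -/
noncomputable def qPochInf (x q : ℝ) : ℝ :=
  ∏' k : ℕ, (1 - x * q ^ k)

open Real Finset
set_option maxHeartbeats 1000000

noncomputable def qS (q a : ℝ) : ℝ := ∑' k : ℕ, Real.log (1 - q ^ (a + (k : ℝ)))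

lemma qP_lt_one {q a : ℝ} (hq0 : 0 < q) (hq1 : q < 1) (ha : 0 < a) : q ^ a < 1 :=
  Real.rpow_lt_one hq0.le hq1 ha


lemma qP_one_sub_pos {q a : ℝ} (hq0 : 0 < q) (hq1 : q < 1) (ha : 0 < a) : 0 < 1 - q ^ a :=
  sub_pos.mpr (qP_lt_one hq0 hq1 ha)


lemma qP_summable {q a : ℝ} (hq0 : 0 < q) (hq1 : q < 1) (ha : 0 < a) :
    Summable (fun k : ℕ => Real.log (1 - q ^ (a + (k : ℝ)))) := by
  have hpos : ∀ k : ℕ, 0 < 1 - q ^ (a + (k : ℝ)) := fun k =>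
    qP_one_sub_pos hq0 hq1 (by positivity)
  have h := (summable_geometric_of_lt_one hq0.le hq1).mul_left
      (q ^ a * (1 - q ^ a)⁻¹)
  have hneg : Summable (fun k : ℕ => -Real.log (1 - q ^ (a + (k : ℝ)))) := by
    refine Summable.of_nonneg_of_le (fun k => ?_) (fun k => ?_) h
    · have := hpos k
      have h1 : q ^ (a + (k : ℝ)) < 1 := qP_lt_one hq0 hq1 (by positivity)
      have h2 : 0 < q ^ (a + (k : ℝ)) := Real.rpow_pos_of_pos hq0 _
      have := Real.log_nonpos (by linarith) (by linarith : 1 - q ^ (a + (k:ℝ)) ≤ 1)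
      linarith
    · have hu : q ^ (a + (k : ℝ)) = q ^ a * q ^ k := by
        rw [Real.rpow_add hq0, Real.rpow_natCast]
      have hule : q ^ (a + (k : ℝ)) ≤ q ^ a := by
        rw [hu]
        nlinarith [pow_le_one₀ hq0.le hq1.le (n := k), Real.rpow_pos_of_pos hq0 a]
      have h1 : 0 < 1 - q ^ (a + (k : ℝ)) := hpos k
      have h2 : 0 < 1 - q ^ a := qP_one_sub_pos hq0 hq1 ha
      have h3 : Real.log ((1 - q ^ (a + (k : ℝ)))⁻¹) ≤ (1 - q ^ (a + (k : ℝ)))⁻¹ - 1 :=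
        Real.log_le_sub_one_of_pos (by positivity)
      rw [Real.log_inv] at h3
      have h4 : (1 - q ^ (a + (k : ℝ)))⁻¹ - 1 = q ^ (a + (k : ℝ)) / (1 - q ^ (a + (k : ℝ))) := by
        field_simp
        ring
      have h5 : q ^ (a + (k : ℝ)) / (1 - q ^ (a + (k : ℝ))) ≤ q ^ (a + (k : ℝ)) / (1 - q ^ a) := by
        apply div_le_div_of_nonneg_left (by positivity) h2
        linarith
      have h6 : q ^ (a + (k : ℝ)) / (1 - q ^ a) = q ^ a * (1 - q ^ a)⁻¹ * q ^ k := by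
        rw [hu]; ring
      linarith
  simpa using hneg.neg


lemma qP_exp_eq {q a : ℝ} (hq0 : 0 < q) (hq1 : q < 1) (ha : 0 < a) :
    qPochInf (q ^ a) q = Real.exp (qS q a) := by
  simp only [qS, qPochInf]
  have hs := (qP_summable hq0 hq1 ha).hasSum
  have hp := hs.rexp
  have hfe : (Real.exp ∘ fun k : ℕ => Real.log (1 - q ^ (a + (k : ℝ)))) =
      fun k : ℕ => 1 - q ^ a * q ^ k := by
    funext k
    have hpos : 0 < 1 - q ^ (a + (k : ℝ)) := qP_one_sub_pos hq0 hq1 (by positivity)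
    simp only [Function.comp_apply, Real.exp_log hpos]
    rw [Real.rpow_add hq0, Real.rpow_natCast]
  rw [hfe] at hp
  exact hp.tprod_eq


lemma qP_shift {q a : ℝ} (hq0 : 0 < q) (hq1 : q < 1) (ha : 0 < a) :
    qS q a = Real.log (1 - q ^ a) + qS q (a + 1) := by
  simp only [qS]
  rw [Summable.tsum_eq_zero_add (qP_summable hq0 hq1 ha)]
  congr 1
  · norm_num
  · exact tsum_congr fun k => by push_cast; ring_nf


lemma qP_shift_many {q a : ℝ} (hq0 : 0 < q) (hq1 : q < 1) (ha : 0 < a) (m : ℕ) :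
    qS q a = (∑ j ∈ range m, Real.log (1 - q ^ (a + (j : ℝ)))) + qS q (a + m) := by
  simp only [qS]
  induction m with
  | zero => simp
  | succ m ih =>
    rw [ih, Finset.sum_range_succ]
    have h2 := qP_shift hq0 hq1 (show (0:ℝ) < a + m by positivity)
    simp only [qS] at h2
    rw [h2]
    have e1 : ∀ k : ℕ, a + (m:ℝ) + 1 + (k:ℝ) = a + ((m:ℕ)+1 : ℕ) + (k:ℝ) := by
      intro k; push_cast; ring
    have : (∑' k : ℕ, Real.log (1 - q ^ ((a + (m:ℝ) + 1) + (k : ℝ)))) =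
        ∑' k : ℕ, Real.log (1 - q ^ ((a + (((m:ℕ)+1:ℕ)) : ℝ) + (k : ℝ))) := by
      apply tsum_congr; intro k; rw [e1 k]
    rw [this]; push_cast; ring


lemma qP_mono {q a b : ℝ} (hq0 : 0 < q) (hq1 : q < 1) (ha : 0 < a) (hab : a ≤ b) :
    qS q a ≤ qS q b := by
  simp only [qS]
  have hb : 0 < b := lt_of_lt_of_le ha hab
  refine Summable.tsum_le_tsum (fun k => ?_) (qP_summable hq0 hq1 ha) (qP_summable hq0 hq1 hb)
  have h1 : q ^ (b + (k:ℝ)) ≤ q ^ (a + (k:ℝ)) :=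
    Real.rpow_le_rpow_of_exponent_ge hq0 hq1.le (by linarith)
  have h2 : 0 < 1 - q ^ (a + (k:ℝ)) := qP_one_sub_pos hq0 hq1 (by positivity)
  exact Real.log_le_log h2 (by linarith)


lemma qP_pt_concave {q u v θ : ℝ} (hq0 : 0 < q) (hq1 : q < 1) (hu : 0 < u) (hv : 0 < v)
    (hθ0 : 0 ≤ θ) (hθ1 : θ ≤ 1) :
    θ * Real.log (1 - q ^ u) + (1 - θ) * Real.log (1 - q ^ v) ≤
      Real.log (1 - q ^ (θ * u + (1 - θ) * v)) := by
  set x := q ^ u with hx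
  set y := q ^ v with hy
  have hx0 : 0 < x := Real.rpow_pos_of_pos hq0 u
  have hy0 : 0 < y := Real.rpow_pos_of_pos hq0 v
  have hx1 : x < 1 := qP_lt_one hq0 hq1 hu
  have hy1 : y < 1 := qP_lt_one hq0 hq1 hv
  have hcomb : q ^ (θ * u + (1 - θ) * v) = x ^ θ * y ^ (1 - θ) := by
    rw [Real.rpow_add hq0, hx, hy, mul_comm θ u, mul_comm (1-θ) v,
      Real.rpow_mul hq0.le, Real.rpow_mul hq0.le]
  -- AM-GM both ways
  have am1 : x ^ θ * y ^ (1 - θ) ≤ θ * x + (1 - θ) * y :=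
    Real.geom_mean_le_arith_mean2_weighted hθ0 (by linarith) hx0.le hy0.le (by ring)
  have am2 : (1 - x) ^ θ * (1 - y) ^ (1 - θ) ≤ θ * (1 - x) + (1 - θ) * (1 - y) :=
    Real.geom_mean_le_arith_mean2_weighted hθ0 (by linarith) (by linarith) (by linarith) (by ring)
  have hsum : x ^ θ * y ^ (1 - θ) + (1 - x) ^ θ * (1 - y) ^ (1 - θ) ≤ 1 := by nlinarith
  have hlt2 : θ * x + (1 - θ) * y < 1 := by
    rcases eq_or_lt_of_le hθ0 with h | h
    · rw [← h]; linarith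
    · nlinarith [mul_nonneg (by linarith : (0:ℝ) ≤ 1 - θ) (by linarith : (0:ℝ) ≤ 1 - y)]
  have hlt1 : x ^ θ * y ^ (1 - θ) < 1 := lt_of_le_of_lt am1 hlt2
  have hkey : (1 - x) ^ θ * (1 - y) ^ (1 - θ) ≤ 1 - x ^ θ * y ^ (1 - θ) := by linarith
  have p1 : (0:ℝ) < (1 - x) ^ θ := Real.rpow_pos_of_pos (by linarith) θ
  have p2 : (0:ℝ) < (1 - y) ^ (1 - θ) := Real.rpow_pos_of_pos (by linarith) (1 - θ)
  have hposL : 0 < (1 - x) ^ θ * (1 - y) ^ (1 - θ) := mul_pos p1 p2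
  have := Real.log_le_log hposL hkey
  rw [Real.log_mul (ne_of_gt p1) (ne_of_gt p2), Real.log_rpow (by linarith),
    Real.log_rpow (by linarith)] at this
  rw [hcomb]
  linarith

-- concavity of S


lemma qP_S_concave {q s t θ : ℝ} (hq0 : 0 < q) (hq1 : q < 1) (hs : 0 < s) (ht : 0 < t)
    (hθ0 : 0 ≤ θ) (hθ1 : θ ≤ 1) :
    θ * qS q s + (1 - θ) * qS q t ≤ qS q (θ * s + (1 - θ) * t) := by
  simp only [qS]
  have hw : 0 < θ * s + (1 - θ) * t := by
    rcases eq_or_lt_of_le hθ0 with h | h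
    · rw [← h]; linarith
    · nlinarith [mul_nonneg (by linarith : (0:ℝ) ≤ 1 - θ) ht.le]
  rw [← tsum_mul_left, ← tsum_mul_left,
    ← Summable.tsum_add ((qP_summable hq0 hq1 hs).mul_left θ)
      ((qP_summable hq0 hq1 ht).mul_left (1 - θ))]
  refine Summable.tsum_le_tsum (fun k => ?_) ?_ (qP_summable hq0 hq1 hw)
  · have := qP_pt_concave (u := s + k) (v := t + k) hq0 hq1 (by positivity) (by positivity) hθ0 hθ1
    have e : θ * (s + (k:ℝ)) + (1 - θ) * (t + (k:ℝ)) = (θ * s + (1 - θ) * t) + (k:ℝ) := by ring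
    rw [e] at this
    exact this
  · exact ((qP_summable hq0 hq1 hs).mul_left θ).add
      ((qP_summable hq0 hq1 ht).mul_left (1 - θ))

-- slope lemma: (1-q^t)/t ≤ (1-q^s)/s for 0 < s ≤ t


lemma qP_slope {q s t : ℝ} (hq0 : 0 < q) (hq1 : q < 1) (hs : 0 < s) (hst : s ≤ t) :
    s * (1 - q ^ t) ≤ t * (1 - q ^ s) := by
  have ht : 0 < t := lt_of_lt_of_le hs hst
  have hl : s / t ≤ 1 := div_le_one_of_le₀ hst ht.le
  have hl0 : 0 ≤ s / t := by positivity
  have hqt0 : 0 < q ^ t := Real.rpow_pos_of_pos hq0 t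
  have hqt1 : q ^ t < 1 := qP_lt_one hq0 hq1 ht
  have am : (q ^ t) ^ (s / t) * 1 ^ (1 - s / t) ≤ (s / t) * q ^ t + (1 - s / t) * 1 :=
    Real.geom_mean_le_arith_mean2_weighted hl0 (by linarith) hqt0.le zero_le_one (by ring)
  rw [Real.one_rpow, mul_one] at am
  have he : (q ^ t) ^ (s / t) = q ^ s := by
    rw [← Real.rpow_mul hq0.le]
    congr 1
    field_simp
  rw [he] at am
  have : q ^ s ≤ (s/t) * q ^ t + (1 - s/t) := by linarith
  have h2 : 1 - q ^ s ≥ (s/t) * (1 - q ^ t) := by nlinarith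
  calc s * (1 - q ^ t) = t * ((s/t) * (1 - q ^ t)) := by field_simp
    _ ≤ t * (1 - q ^ s) := by nlinarith


lemma qP_chord1 {q a h : ℝ} (hq0 : 0 < q) (hq1 : q < 1) (ha : 0 < a)
    (h0 : 0 ≤ h) (h1 : h ≤ 1) :
    qS q a - qS q (a + h) ≤ h * Real.log (1 - q ^ a) := by
  have hc := qP_S_concave (s := a) (t := a + 1) (θ := 1 - h) hq0 hq1 ha (by linarith)
    (by linarith) (by linarith)
  have e : (1 - h) * a + (1 - (1 - h)) * (a + 1) = a + h := by ring
  rw [e] at hc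
  have hsh := qP_shift hq0 hq1 ha
  nlinarith [hc, hsh]


lemma qP_chord2 {q a h : ℝ} (hq0 : 0 < q) (hq1 : q < 1) (ha : 0 < a)
    (h0 : 0 ≤ h) (h1 : h ≤ 1) (ha' : 0 < a + h - 1) :
    qS q (a + h) - qS q a ≤ -(h * Real.log (1 - q ^ (a + h - 1))) := by
  have hc := qP_S_concave (s := a + h - 1) (t := a + h) (θ := h) hq0 hq1 ha'
    (by linarith) h0 h1
  have e : h * (a + h - 1) + (1 - h) * (a + h) = a := by ring
  rw [e] at hc
  have hsh := qP_shift hq0 hq1 ha'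
  have e2 : a + h - 1 + 1 = a + h := by ring
  rw [e2] at hsh
  nlinarith [hc, hsh]


/-- Uniform bound: for `A, B > 0` there is a constant `c` (depending only on `A, B`)
such that for all integers `n ≥ 1` and all `q ∈ (1/2, 1)`,
`(q^{A+n};q)_∞ / (q^{B+n};q)_∞ ≤ c (1-q^n)^{B-A}`. -/
theorem qPochInf_ratio_bound (A B : ℝ) (hA : 0 < A) (hB : 0 < B) :
    ∃ c : ℝ, ∀ n : ℕ, 1 ≤ n → ∀ q : ℝ, q ∈ Set.Ioo (1/2 : ℝ) 1 →
      qPochInf (q ^ (A + n)) q / qPochInf (q ^ (B + n)) q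
        ≤ c * (1 - q ^ n) ^ (B - A) := by
  rcases le_total A B with hAB | hAB
  · -- case A ≤ B
    set m : ℕ := ⌊B - A⌋₊ with hm
    refine ⟨Real.exp (((m : ℝ) + 1) * Real.log (1 + A + m)), fun n hn q hq => ?_⟩
    obtain ⟨hq2, hq1⟩ := hq
    have hq0 : 0 < q := by norm_num at hq2 ⊢; linarith
    have hn1 : (1:ℝ) ≤ (n:ℝ) := by exact_mod_cast hn
    have hApn : 0 < A + (n:ℝ) := by linarith
    have hBpn : 0 < B + (n:ℝ) := by linarith
    have hnr : ((q:ℝ) ^ n : ℝ) = q ^ ((n:ℝ)) := (Real.rpow_natCast q n).symm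
    have h1qn : 0 < 1 - q ^ ((n:ℝ)) := qP_one_sub_pos hq0 hq1 (by linarith)
    have h1qn' : 0 < 1 - q ^ n := by rw [hnr]; exact h1qn
    set ln := Real.log (1 - q ^ ((n:ℝ))) with hln
    set L := Real.log (1 + A + (m:ℝ)) with hL
    have hL0 : 0 ≤ L := Real.log_nonneg (by nlinarith [(Nat.cast_nonneg m : (0:ℝ) ≤ (m:ℝ))])
    set θ := B - A - (m:ℝ) with hθdef
    have hθ0 : 0 ≤ θ := sub_nonneg.mpr (Nat.floor_le (by linarith))
    have hθ1 : θ ≤ 1 := by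
      have := Nat.lt_floor_add_one (B - A)
      rw [hθdef]; push_cast at this ⊢; linarith
    -- per-index bound
    have hbnd : ∀ j : ℕ, (j:ℝ) ≤ (m:ℝ) →
        Real.log (1 - q ^ (A + (n:ℝ) + (j:ℝ))) ≤ L + ln := by
      intro j hj
      have hsl := qP_slope (s := (n:ℝ)) (t := A + (n:ℝ) + (j:ℝ)) hq0 hq1 (by linarith)
        (by linarith [(Nat.cast_nonneg j : (0:ℝ) ≤ (j:ℝ))])
      have hpj : 0 < 1 - q ^ (A + (n:ℝ) + (j:ℝ)) :=
        qP_one_sub_pos hq0 hq1 (by linarith [(Nat.cast_nonneg j : (0:ℝ) ≤ (j:ℝ))])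
      have h2 : A + (n:ℝ) + (j:ℝ) ≤ (n:ℝ) * (1 + A + (m:ℝ)) := by
        nlinarith [mul_nonneg (by linarith : (0:ℝ) ≤ (n:ℝ) - 1)
          (by linarith [(Nat.cast_nonneg m : (0:ℝ) ≤ (m:ℝ))] : (0:ℝ) ≤ A + (m:ℝ)), hj,
          (Nat.cast_nonneg j : (0:ℝ) ≤ (j:ℝ))]
      have h3 : (A + (n:ℝ) + (j:ℝ)) * (1 - q ^ ((n:ℝ))) ≤
          ((n:ℝ) * (1 + A + (m:ℝ))) * (1 - q ^ ((n:ℝ))) :=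
        mul_le_mul_of_nonneg_right h2 h1qn.le
      have h4 : (n:ℝ) * (1 - q ^ (A + (n:ℝ) + (j:ℝ))) ≤
          (n:ℝ) * ((1 + A + (m:ℝ)) * (1 - q ^ ((n:ℝ)))) := by nlinarith [hsl, h3]
      have hstep : 1 - q ^ (A + (n:ℝ) + (j:ℝ)) ≤ (1 + A + (m:ℝ)) * (1 - q ^ ((n:ℝ))) :=
        le_of_mul_le_mul_left h4 (by linarith)
      have := Real.log_le_log hpj hstep
      rwa [Real.log_mul (by positivity) (ne_of_gt h1qn)] at this
    -- telescoping
    have key1 := qP_shift_many hq0 hq1 hApn m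
    have key2 := qP_chord1 (a := A + (n:ℝ) + (m:ℝ)) (h := θ) hq0 hq1
      (by linarith [(Nat.cast_nonneg m : (0:ℝ) ≤ (m:ℝ))]) hθ0 hθ1
    have e : A + (n:ℝ) + (m:ℝ) + θ = B + (n:ℝ) := by rw [hθdef]; ring
    rw [e] at key2
    have hsum : (∑ j ∈ range m, Real.log (1 - q ^ (A + (n:ℝ) + (j:ℝ)))) ≤ (m:ℝ) * (L + ln) := by
      calc (∑ j ∈ range m, Real.log (1 - q ^ (A + (n:ℝ) + (j:ℝ))))
          ≤ ∑ _j ∈ range m, (L + ln) := by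
            refine Finset.sum_le_sum fun j hj => hbnd j ?_
            exact_mod_cast le_of_lt (List.mem_range.mp (by simpa using hj))
        _ = (m:ℝ) * (L + ln) := by rw [Finset.sum_const, card_range, nsmul_eq_mul]
    have hθterm : θ * Real.log (1 - q ^ (A + (n:ℝ) + (m:ℝ))) ≤ θ * (L + ln) :=
      mul_le_mul_of_nonneg_left (hbnd m le_rfl) hθ0
    -- final log inequality
    have hfin : qS q (A + (n:ℝ)) - qS q (B + (n:ℝ)) ≤
        ((m:ℝ) + 1) * L + ln * (B - A) := by
      have e1 : θ * ln = (B - A) * ln - (m:ℝ) * ln := by rw [hθdef]; ring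
      have e2 : θ * L ≤ 1 * L := mul_le_mul_of_nonneg_right hθ1 hL0
      nlinarith [key1, key2, hsum, hθterm]
    -- convert to the product statement
    have hLe := qP_exp_eq (a := A + (n:ℝ)) hq0 hq1 hApn
    have hRe := qP_exp_eq (a := B + (n:ℝ)) hq0 hq1 hBpn
    rw [hLe, hRe, ← Real.exp_sub]
    have hrw : (1 - q ^ n : ℝ) ^ (B - A) = Real.exp (ln * (B - A)) := by
      rw [hln, ← hnr]; exact Real.rpow_def_of_pos h1qn' (B - A)
    rw [hrw, ← Real.exp_add]
    exact Real.exp_le_exp.mpr (by rw [hL]; push_cast at hfin ⊢; linarith)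
  · -- case B ≤ A
    set m : ℕ := ⌊A - B⌋₊ with hm
    refine ⟨Real.exp (-Real.log (min 1 A)), fun n hn q hq => ?_⟩
    obtain ⟨hq2, hq1⟩ := hq
    have hq0 : 0 < q := by norm_num at hq2 ⊢; linarith
    have hn1 : (1:ℝ) ≤ (n:ℝ) := by exact_mod_cast hn
    have hApn : 0 < A + (n:ℝ) := by linarith
    have hBpn : 0 < B + (n:ℝ) := by linarith
    have hnr : ((q:ℝ) ^ n : ℝ) = q ^ ((n:ℝ)) := (Real.rpow_natCast q n).symm
    have h1qn : 0 < 1 - q ^ ((n:ℝ)) := qP_one_sub_pos hq0 hq1 (by linarith)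
    have h1qn' : 0 < 1 - q ^ n := by rw [hnr]; exact h1qn
    set ln := Real.log (1 - q ^ ((n:ℝ))) with hln
    set θ := A - B - (m:ℝ) with hθdef
    have hθ0 : 0 ≤ θ := sub_nonneg.mpr (Nat.floor_le (by linarith))
    have hθ1 : θ ≤ 1 := by
      have := Nat.lt_floor_add_one (A - B)
      rw [hθdef]; push_cast at this ⊢; linarith
    obtain ⟨μ, hμ⟩ : ∃ μ : ℝ, μ = min 1 A := ⟨_, rfl⟩
    have hμ0 : 0 < μ := hμ ▸ lt_min one_pos hA
    have hμ1 : μ ≤ 1 := hμ ▸ min_le_left 1 A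
    have hμA : μ ≤ A := hμ ▸ min_le_right 1 A
    have hlogμ : Real.log μ ≤ 0 := Real.log_nonpos hμ0.le hμ1
    -- bound: log (1 - q^(A+n-1)) ≥ log μ + ln
    have hlow : Real.log μ + ln ≤ Real.log (1 - q ^ (A + (n:ℝ) - 1)) := by
      have hμn0 : 0 < μ * (n:ℝ) := mul_pos hμ0 (by linarith)
      have hsl := qP_slope (s := μ * (n:ℝ)) (t := (n:ℝ)) hq0 hq1 hμn0
        (by nlinarith [mul_le_mul_of_nonneg_right hμ1 (by linarith : (0:ℝ) ≤ (n:ℝ))])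
      have hq_mono : q ^ (A + (n:ℝ) - 1) ≤ q ^ (μ * (n:ℝ)) := by
        apply Real.rpow_le_rpow_of_exponent_ge hq0 hq1.le
        nlinarith [mul_nonneg (by linarith : (0:ℝ) ≤ 1 - μ) (by linarith : (0:ℝ) ≤ (n:ℝ) - 1)]
      have hp2 : 0 < 1 - q ^ (μ * (n:ℝ)) := qP_one_sub_pos hq0 hq1 hμn0
      have h4 : (n:ℝ) * (μ * (1 - q ^ ((n:ℝ)))) ≤ (n:ℝ) * (1 - q ^ (μ * (n:ℝ))) := by
        nlinarith [hsl]
      have h5 : μ * (1 - q ^ ((n:ℝ))) ≤ 1 - q ^ (μ * (n:ℝ)) :=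
        le_of_mul_le_mul_left h4 (by linarith)
      have hstep : μ * (1 - q ^ ((n:ℝ))) ≤ 1 - q ^ (A + (n:ℝ) - 1) := by
        linarith [hq_mono]
      have := Real.log_le_log (mul_pos hμ0 h1qn) hstep
      rwa [Real.log_mul (ne_of_gt hμ0) (ne_of_gt h1qn)] at this
    -- per-index lower bound on denominator factors
    have hbnd : ∀ j : ℕ, ln ≤ Real.log (1 - q ^ (B + (n:ℝ) + (j:ℝ))) := by
      intro j
      have hq_mono : q ^ (B + (n:ℝ) + (j:ℝ)) ≤ q ^ ((n:ℝ)) :=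
        Real.rpow_le_rpow_of_exponent_ge hq0 hq1.le (by linarith [(Nat.cast_nonneg j : (0:ℝ) ≤ (j:ℝ))])
      exact Real.log_le_log h1qn (by linarith)
    have key1 := qP_shift_many hq0 hq1 hBpn m
    have ha' : 0 < B + (n:ℝ) + (m:ℝ) + θ - 1 := by rw [hθdef]; push_cast; linarith
    have key2 := qP_chord2 (a := B + (n:ℝ) + (m:ℝ)) (h := θ) hq0 hq1
      (by linarith [(Nat.cast_nonneg m : (0:ℝ) ≤ (m:ℝ))]) hθ0 hθ1 ha'
    have e : B + (n:ℝ) + (m:ℝ) + θ = A + (n:ℝ) := by rw [hθdef]; ring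
    rw [e] at key2
    have hsum : (m:ℝ) * ln ≤ ∑ j ∈ range m, Real.log (1 - q ^ (B + (n:ℝ) + (j:ℝ))) := by
      calc (m:ℝ) * ln = ∑ _j ∈ range m, ln := by rw [Finset.sum_const, card_range, nsmul_eq_mul]
        _ ≤ _ := Finset.sum_le_sum fun j _ => hbnd j
    have hθterm : -(θ * Real.log (1 - q ^ (A + (n:ℝ) - 1))) ≤ -(θ * (Real.log μ + ln)) := by
      have := mul_le_mul_of_nonneg_left hlow hθ0
      linarith
    have hfin : qS q (A + (n:ℝ)) - qS q (B + (n:ℝ)) ≤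
        (-Real.log μ) + ln * (B - A) := by
      have e1 : θ * ln = -((B - A) * ln) - (m:ℝ) * ln := by rw [hθdef]; ring
      have e2 : θ * Real.log μ ≥ 1 * Real.log μ := by
        nlinarith [mul_le_mul_of_nonneg_right hθ1 (neg_nonneg.mpr hlogμ)]
      nlinarith [key1, key2, hsum, hθterm]
    have hLe := qP_exp_eq (a := A + (n:ℝ)) hq0 hq1 hApn
    have hRe := qP_exp_eq (a := B + (n:ℝ)) hq0 hq1 hBpn
    rw [hLe, hRe, ← Real.exp_sub]
    have hrw : (1 - q ^ n : ℝ) ^ (B - A) = Real.exp (ln * (B - A)) := by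
      rw [hln, ← hnr]; exact Real.rpow_def_of_pos h1qn' (B - A)
    rw [hrw, ← Real.exp_add]
    exact Real.exp_le_exp.mpr (by rw [← hμ]; linarith)
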